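/- Let d ≥ 2, ν > d real, and ρ > 2√d real. Then Σ_{h ∈ ℤ^d, |h| ≥ ρ} 1/|h|^ν ≤ (2 π^{d/2}/Γ(d/2)) · Σ_{i=0}^{d-1} C(d-1, i) · d^{(d-1-i)/2} / ((ν-1-i)(ρ - 2√d)^{ν-1-i}). -/

import Mathlib

open scoped BigOperators

/-- Euclidean norm of a lattice point of `ℤ^d`. -/
noncomputable def latNorm {d : ℕ} (h : Fin d → ℤ) : ℝ :=
  Real.sqrt (∑ i, ((h i : ℝ)) ^ 2)

namespace LatTail

open MeasureTheory Set Metric ENNReal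

variable {d : ℕ}

abbrev E (d : ℕ) := EuclideanSpace ℝ (Fin d)

def toE (h : Fin d → ℤ) : E d := WithLp.toLp 2 (fun i => (h i : ℝ))

lemma latNorm_eq (h : Fin d → ℤ) : latNorm h = ‖toE h‖ := by
  rw [EuclideanSpace.norm_eq]
  simp [latNorm, toE, sq_abs]

def cube (h : Fin d → ℤ) : Set (E d) :=
  (MeasurableEquiv.toLp 2 (Fin d → ℝ)).symm ⁻¹' (Set.univ.pi fun i => Ico ((h i : ℝ)) (h i + 1))

lemma mem_cube {h : Fin d → ℤ} {x : E d} :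
    x ∈ cube h ↔ ∀ i, (h i : ℝ) ≤ x i ∧ x i < h i + 1 := by
  simp [cube, Set.mem_pi]

lemma measurableSet_cube (h : Fin d → ℤ) : MeasurableSet (cube h) :=
  (MeasurableEquiv.toLp 2 (Fin d → ℝ)).symm.measurable
    (MeasurableSet.univ_pi fun _ => measurableSet_Ico)

lemma volume_cube (h : Fin d → ℤ) : volume (cube h) = 1 := by
  rw [cube, (EuclideanSpace.volume_preserving_symm_measurableEquiv_toLp (Fin d)).measure_preimage
    ((MeasurableSet.univ_pi fun _ => measurableSet_Ico).nullMeasurableSet)]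
  simp [volume_pi_pi, Real.volume_Ico]

lemma cube_disjoint {h h' : Fin d → ℤ} (hne : h ≠ h') : Disjoint (cube h) (cube h') := by
  rw [Set.disjoint_left]
  intro x hx hx'
  apply hne
  funext i
  rw [mem_cube] at hx hx'
  have e1 : h i = ⌊x i⌋ := ((Int.floor_eq_iff (R := ℝ)).2 ⟨(hx i).1, (hx i).2⟩).symm
  have e2 : h' i = ⌊x i⌋ := ((Int.floor_eq_iff (R := ℝ)).2 ⟨(hx' i).1, (hx' i).2⟩).symm
  rw [e1, e2]

lemma norm_sub_le_of_mem_cube {h : Fin d → ℤ} {x : E d} (hx : x ∈ cube h) :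
    ‖x - toE h‖ ≤ Real.sqrt d := by
  rw [mem_cube] at hx
  rw [EuclideanSpace.norm_eq]
  apply Real.sqrt_le_sqrt
  calc ∑ i, ‖(x - toE h) i‖ ^ 2 ≤ ∑ _i : Fin d, (1 : ℝ) := by
        apply Finset.sum_le_sum
        intro i _
        have : (x - toE h) i = x i - (h i : ℝ) := rfl
        rw [this, Real.norm_eq_abs, sq_abs]
        have h1 := (hx i).1
        have h2 := (hx i).2
        nlinarith
    _ = (d : ℝ) := by simp

lemma lintegral_norm_polar (hd : 0 < d) (g : ℝ → ℝ≥0∞) (hg : Measurable g) :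
    ∫⁻ x : E d, g ‖x‖ =
      (d : ℝ≥0∞) * volume (ball (0 : E d) 1) *
        ∫⁻ y in Ioi (0:ℝ), ENNReal.ofReal (y ^ (d - 1)) * g y := by
  haveI : Nonempty (Fin d) := ⟨⟨0, hd⟩⟩
  haveI : Nontrivial (E d) := by
    have : 0 < Module.finrank ℝ (E d) := by
      rw [finrank_euclideanSpace_fin]; exact hd
    exact Module.nontrivial_of_finrank_pos this
  have hdim : Module.finrank ℝ (E d) = d := finrank_euclideanSpace_fin
  calc ∫⁻ x : E d, g ‖x‖
      = ∫⁻ x in ({0}ᶜ : Set (E d)), g ‖x‖ := by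
        rw [restrict_compl_singleton]
    _ = ∫⁻ x : ({0}ᶜ : Set (E d)), g ‖x.1‖ ∂((volume : Measure (E d)).comap Subtype.val) :=
        (lintegral_subtype_comap (measurableSet_singleton 0).compl _).symm
    _ = ∫⁻ p : sphere (0:E d) 1 × Ioi (0:ℝ), g p.2
          ∂((volume : Measure (E d)).toSphere.prod
              (Measure.volumeIoiPow (Module.finrank ℝ (E d) - 1))) := by
        rw [← (volume : Measure (E d)).measurePreserving_homeomorphUnitSphereProd.lintegral_comp_emb
          (Homeomorph.measurableEmbedding _) (fun p => g p.2)]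
        simp
    _ = (volume : Measure (E d)).toSphere univ *
          ∫⁻ y : Ioi (0:ℝ), g y.1 ∂(Measure.volumeIoiPow (Module.finrank ℝ (E d) - 1)) := by
        rw [lintegral_prod (fun p : ↑(sphere (0:E d) 1) × ↑(Ioi (0:ℝ)) => g ↑p.2)
          ((hg.comp (measurable_subtype_coe.comp measurable_snd)).aemeasurable)]
        simp [lintegral_const, mul_comm]
    _ = (d : ℝ≥0∞) * volume (ball (0 : E d) 1) *
          ∫⁻ y in Ioi (0:ℝ), ENNReal.ofReal (y ^ (d - 1)) * g y := by
        rw [Measure.toSphere_apply_univ, hdim]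
        congr 1
        rw [Measure.volumeIoiPow]
        rw [lintegral_withDensity_eq_lintegral_mul (Measure.comap Subtype.val volume)
            (f := fun r : Ioi (0:ℝ) => ENNReal.ofReal (r.1 ^ (d - 1)))
            ((measurable_subtype_coe.pow_const _).ennreal_ofReal)
            (g := fun y : Ioi (0:ℝ) => g y.1) (hg.comp measurable_subtype_coe)]
        exact lintegral_subtype_comap measurableSet_Ioi
          (fun y => ENNReal.ofReal (y ^ (d - 1)) * g y)

lemma oneDim (d : ℕ) (hd : 0 < d) (ν s c : ℝ) (hs : 0 ≤ s) (hcs : 0 < c - s)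
    (hν : (d : ℝ) < ν) :
    ∫⁻ y in Ioi (0:ℝ), ENNReal.ofReal (y ^ (d - 1)) *
        (Ici c).indicator (fun y => ENNReal.ofReal ((y - s) ^ (-ν))) y
      = ∑ i ∈ Finset.range d, ENNReal.ofReal
          (((d-1).choose i : ℝ) * s ^ (d - 1 - i) *
            ((c - s) ^ ((i : ℝ) + 1 - ν) / (ν - 1 - (i : ℝ)))) := by
  have hc : 0 < c := lt_of_lt_of_le hcs (by linarith)
  set F : ℝ → ℝ≥0∞ := fun y => ENNReal.ofReal (y ^ (d - 1) * (y - s) ^ (-ν)) with hF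
  have step1 : ∀ y : ℝ, ENNReal.ofReal (y ^ (d - 1)) *
      (Ici c).indicator (fun y => ENNReal.ofReal ((y - s) ^ (-ν))) y
      = (Ici c).indicator F y := by
    intro y
    by_cases hy : y ∈ Ici c
    · rw [indicator_of_mem hy, indicator_of_mem hy, hF]
      exact (ENNReal.ofReal_mul (pow_nonneg (le_trans hc.le hy) _)).symm
    · rw [indicator_of_notMem hy, indicator_of_notMem hy, mul_zero]
  rw [lintegral_congr (fun y => step1 y)]
  have step2 : ∫⁻ y in Ioi (0:ℝ), (Ici c).indicator F y = ∫⁻ y in Ioi c, F y := by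
    have hsub : Ici c ∩ Ioi (0:ℝ) = Ici c := by
      rw [Set.inter_eq_left]
      exact fun y hy => lt_of_lt_of_le hc hy
    rw [lintegral_indicator measurableSet_Ici, Measure.restrict_restrict measurableSet_Ici, hsub,
      setLIntegral_congr (Ioi_ae_eq_Ici (μ := volume) (a := c)).symm]
  rw [step2]
  have step3 : ∫⁻ y in Ioi c, F y = ∫⁻ x in Ioi (c - s), F (x + s) := by
    rw [← (measurePreserving_add_right volume s).setLIntegral_comp_preimage_emb
      (MeasurableEquiv.addRight s).measurableEmbedding F (Ioi c)]
    congr 1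
    ext x
    simp [lt_sub_iff_add_lt]
  rw [step3]
  have hd1 : d - 1 + 1 = d := Nat.succ_pred_eq_of_pos hd
  have step4 : ∀ x ∈ Ioi (c - s), F (x + s) =
      ∑ i ∈ Finset.range d, ENNReal.ofReal
        (((d-1).choose i : ℝ) * s ^ (d - 1 - i) * x ^ ((i : ℝ) - ν)) := by
    intro x hx
    have hx0 : 0 < x := lt_trans hcs hx
    have hxs : x + s - s = x := by ring
    rw [hF]
    simp only [hxs]
    rw [add_pow, hd1, Finset.sum_mul, ← ENNReal.ofReal_sum_of_nonneg]
    · congr 1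
      apply Finset.sum_congr rfl
      intro i hi
      have hsplit : x ^ ((i : ℝ) - ν) = x ^ (i : ℝ) * x ^ (-ν) := by
        rw [← Real.rpow_add hx0]; ring_nf
      rw [hsplit, ← Real.rpow_natCast x i]
      ring
    · intro i _
      have : (0:ℝ) ≤ x ^ (-ν) := Real.rpow_nonneg hx0.le _
      positivity
  rw [setLIntegral_congr_fun measurableSet_Ioi step4]
  rw [lintegral_finset_sum _ (fun i _ => by fun_prop)]
  apply Finset.sum_congr rfl
  intro i hi
  have hiν : (i : ℝ) - ν < -1 := by
    have h2 : i + 1 ≤ d := Finset.mem_range.1 hi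
    have : (i : ℝ) + 1 ≤ (d : ℝ) := by exact_mod_cast h2
    linarith
  have hK : (0:ℝ) ≤ ((d-1).choose i : ℝ) * s ^ (d - 1 - i) := by positivity
  have hint : IntegrableOn (fun x : ℝ => ((d-1).choose i : ℝ) * s ^ (d - 1 - i) * x ^ ((i:ℝ) - ν))
      (Ioi (c - s)) := by
    exact (integrableOn_Ioi_rpow_of_lt hiν hcs).const_mul _
  rw [← ofReal_integral_eq_lintegral_ofReal hint]
  · congr 1
    rw [integral_const_mul, integral_Ioi_rpow_of_lt hiν hcs]
    have h1 : (i : ℝ) - ν + 1 = (i : ℝ) + 1 - ν := by ring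
    rw [h1]
    have h2 : -(c - s) ^ ((i:ℝ) + 1 - ν) / ((i:ℝ) + 1 - ν)
        = (c - s) ^ ((i:ℝ) + 1 - ν) / (ν - 1 - (i:ℝ)) := by
      rw [div_eq_div_iff (by linarith) (by linarith)]
      ring
    rw [h2]
  · filter_upwards [ae_restrict_mem measurableSet_Ioi] with x hx
    have hx0 : (0:ℝ) < x := lt_trans hcs hx
    have : (0:ℝ) ≤ x ^ ((i:ℝ) - ν) := Real.rpow_nonneg hx0.le _
    positivity

end LatTail

/-- For `d ≥ 2`, real `ν > d` and real `ρ > 2√d`,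
`Σ_{h ∈ ℤ^d, |h| ≥ ρ} 1/|h|^ν ≤ (2 π^{d/2}/Γ(d/2)) Σ_{i=0}^{d-1} C(d-1,i) d^{(d-1-i)/2}
  / ((ν-1-i)(ρ-2√d)^{ν-1-i})`. -/
theorem lattice_tail_sum_le (d : ℕ) (hd : 2 ≤ d) (ν ρ : ℝ) (hν : (d : ℝ) < ν)
    (hρ : 2 * Real.sqrt d < ρ) :
    Summable (fun h : {h : Fin d → ℤ // ρ ≤ latNorm (h : Fin d → ℤ)} =>
      1 / latNorm (h : Fin d → ℤ) ^ ν) ∧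
    ∑' h : {h : Fin d → ℤ // ρ ≤ latNorm (h : Fin d → ℤ)},
        1 / latNorm (h : Fin d → ℤ) ^ ν ≤
      (2 * Real.pi ^ ((d : ℝ) / 2) / Real.Gamma ((d : ℝ) / 2)) *
        ∑ i ∈ Finset.range d, (Nat.choose (d - 1) i : ℝ) *
          (d : ℝ) ^ (((d : ℝ) - 1 - (i : ℝ)) / 2) /
            ((ν - 1 - (i : ℝ)) * (ρ - 2 * Real.sqrt d) ^ (ν - 1 - (i : ℝ))) := by
  classical
  open MeasureTheory Set Metric ENNReal LatTail in
  have hd0 : 0 < d := lt_of_lt_of_le two_pos hd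
  set s : ℝ := Real.sqrt d with hs_def
  have hs : 0 ≤ s := Real.sqrt_nonneg _
  have hspos : 0 < s := Real.sqrt_pos.2 (by exact_mod_cast hd0)
  have hb : 0 < ρ - 2 * s := by linarith
  have hρ0 : 0 < ρ := by linarith
  have hν0 : 0 < ν := lt_of_le_of_lt (by exact_mod_cast Nat.zero_le d) hν
  set S := {h : Fin d → ℤ // ρ ≤ latNorm (h : Fin d → ℤ)} with hS_def
  set g : ℝ → ℝ≥0∞ :=
    fun y => (Ici (ρ - s)).indicator (fun y => ENNReal.ofReal ((y - s) ^ (-ν))) y with hg_def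
  have hg : Measurable g := Measurable.indicator (by fun_prop) measurableSet_Ici
  -- Step A : per-cube bound
  have stepA : ∀ h : S, ENNReal.ofReal (1 / latNorm (h : Fin d → ℤ) ^ ν)
      ≤ ∫⁻ x in cube (h : Fin d → ℤ), g ‖x‖ := by
    rintro ⟨h, hh⟩
    have hne : ρ ≤ ‖toE h‖ := by rw [← latNorm_eq]; exact hh
    have key : ∀ x ∈ cube h, ENNReal.ofReal (1 / latNorm h ^ ν) ≤ g ‖x‖ := by
      intro x hx
      have hsub : ‖x - toE h‖ ≤ s := norm_sub_le_of_mem_cube hx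
      have h1 : ‖toE h‖ - s ≤ ‖x‖ := by
        have h3 := norm_sub_norm_le (toE h) x
        rw [norm_sub_rev] at h3
        linarith
      have h2 : ‖x‖ - s ≤ ‖toE h‖ := by
        have h3 := norm_sub_norm_le x (toE h)
        linarith
      have hmem : ‖x‖ ∈ Ici (ρ - s) := by
        simp only [mem_Ici]; linarith
      have hpos : 0 < ‖x‖ - s := by
        have : ρ - s ≤ ‖x‖ := hmem
        linarith
      have hrw : 1 / latNorm h ^ ν = ‖toE h‖ ^ (-ν) := by
        rw [latNorm_eq, Real.rpow_neg (norm_nonneg _), one_div]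
      rw [hrw, hg_def]
      simp only [indicator_of_mem hmem]
      exact ENNReal.ofReal_le_ofReal
        (Real.rpow_le_rpow_of_nonpos hpos h2 (by linarith))
    calc ENNReal.ofReal (1 / latNorm h ^ ν)
        = ENNReal.ofReal (1 / latNorm h ^ ν) * volume (cube h) := by
          rw [volume_cube, mul_one]
      _ = ∫⁻ _x in cube h, ENNReal.ofReal (1 / latNorm h ^ ν) := (setLIntegral_const _ _).symm
      _ ≤ ∫⁻ x in cube h, g ‖x‖ := setLIntegral_mono (hg.comp measurable_norm) key
  -- Step B : sum over cubes ≤ full integral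
  have stepB : ∑' h : S, ENNReal.ofReal (1 / latNorm (h : Fin d → ℤ) ^ ν)
      ≤ ∫⁻ x : E d, g ‖x‖ := by
    calc ∑' h : S, ENNReal.ofReal (1 / latNorm (h : Fin d → ℤ) ^ ν)
        ≤ ∑' h : S, ∫⁻ x in cube (h : Fin d → ℤ), g ‖x‖ := ENNReal.tsum_le_tsum stepA
      _ = ∫⁻ x in ⋃ h : S, cube (h : Fin d → ℤ), g ‖x‖ := by
          refine (lintegral_iUnion (fun h : S => measurableSet_cube _) ?_ _).symm
          intro a b hab
          exact cube_disjoint (fun e => hab (Subtype.ext e))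
      _ ≤ ∫⁻ x : E d, g ‖x‖ := setLIntegral_le_lintegral _ _
  -- Step C : polar coordinates and 1-d computation
  have hcs : 0 < (ρ - s) - s := by linarith
  have stepC : ∫⁻ x : E d, g ‖x‖ =
      (d : ℝ≥0∞) * volume (ball (0 : E d) 1) *
        ∑ i ∈ Finset.range d, ENNReal.ofReal
          (((d-1).choose i : ℝ) * s ^ (d - 1 - i) *
            ((ρ - 2 * s) ^ ((i : ℝ) + 1 - ν) / (ν - 1 - (i : ℝ)))) := by
    rw [lintegral_norm_polar hd0 g hg, hg_def,
      oneDim d hd0 ν s (ρ - s) hs hcs hν]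
    have : (ρ - s) - s = ρ - 2 * s := by ring
    rw [this]
  -- constant evaluation
  haveI : Nonempty (Fin d) := ⟨⟨0, hd0⟩⟩
  have hΓpos : 0 < Real.Gamma ((d:ℝ)/2) := Real.Gamma_pos_of_pos (by positivity)
  have hvol : (d : ℝ≥0∞) * volume (ball (0 : E d) 1)
      = ENNReal.ofReal ((d:ℝ) * (Real.sqrt Real.pi ^ d / Real.Gamma ((d:ℝ)/2 + 1))) := by
    rw [EuclideanSpace.volume_ball]
    simp only [Fintype.card_fin, ENNReal.ofReal_one, one_pow, one_mul]
    rw [← ENNReal.ofReal_natCast, ← ENNReal.ofReal_mul (by positivity)]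
  have hcst : (d:ℝ) * (Real.sqrt Real.pi ^ d / Real.Gamma ((d:ℝ)/2 + 1))
      = 2 * Real.pi ^ ((d:ℝ)/2) / Real.Gamma ((d:ℝ)/2) := by
    have h1 : Real.Gamma ((d:ℝ)/2 + 1) = ((d:ℝ)/2) * Real.Gamma ((d:ℝ)/2) :=
      Real.Gamma_add_one (by positivity)
    have h2 : Real.sqrt Real.pi ^ d = Real.pi ^ ((d:ℝ)/2) := by
      rw [Real.sqrt_eq_rpow, ← Real.rpow_natCast (Real.pi ^ (1/2:ℝ)) d,
        ← Real.rpow_mul Real.pi_pos.le]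
      congr 1
      ring
    have hd0' : (0:ℝ) < d := by exact_mod_cast hd0
    rw [h1, h2]
    field_simp
  -- per-term algebra
  have hterm : ∀ i ∈ Finset.range d,
      ((d-1).choose i : ℝ) * s ^ (d - 1 - i) *
          ((ρ - 2 * s) ^ ((i : ℝ) + 1 - ν) / (ν - 1 - (i : ℝ)))
        = (Nat.choose (d - 1) i : ℝ) * (d : ℝ) ^ (((d : ℝ) - 1 - (i : ℝ)) / 2) /
            ((ν - 1 - (i : ℝ)) * (ρ - 2 * s) ^ (ν - 1 - (i : ℝ))) := by
    intro i hi
    have hi' : i < d := Finset.mem_range.1 hi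
    have hi1 : i ≤ d - 1 := Nat.le_pred_of_lt hi'
    have hiν : (0:ℝ) < ν - 1 - (i:ℝ) := by
      have h2 : i + 1 ≤ d := hi'
      have : (i : ℝ) + 1 ≤ (d : ℝ) := by exact_mod_cast h2
      linarith
    have hcast : ((d - 1 - i : ℕ):ℝ) = (d:ℝ) - 1 - (i:ℝ) := by
      rw [Nat.cast_sub hi1, Nat.cast_sub (Nat.one_le_iff_ne_zero.2 hd0.ne')]
      norm_num
    have hsd : s ^ (d - 1 - i) = (d:ℝ) ^ (((d:ℝ) - 1 - (i:ℝ))/2) := by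
      rw [hs_def, Real.sqrt_eq_rpow, ← Real.rpow_natCast ((d:ℝ) ^ (1/2:ℝ)) (d - 1 - i),
        ← Real.rpow_mul (by positivity), hcast]
      congr 1
      ring
    have hbneg : (ρ - 2 * s) ^ ((i:ℝ)+1-ν) = ((ρ - 2 * s) ^ (ν - 1 - (i:ℝ)))⁻¹ := by
      rw [show (i:ℝ)+1-ν = -(ν-1-(i:ℝ)) by ring, Real.rpow_neg hb.le]
    have hbpos : 0 < (ρ - 2 * s) ^ (ν - 1 - (i:ℝ)) := Real.rpow_pos_of_pos hb _
    rw [hsd, hbneg]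
    field_simp
  -- the key bound in ℝ≥0∞
  have hsumnn : ∀ i ∈ Finset.range d, (0:ℝ) ≤
      ((d-1).choose i : ℝ) * s ^ (d - 1 - i) *
        ((ρ - 2 * s) ^ ((i : ℝ) + 1 - ν) / (ν - 1 - (i : ℝ))) := by
    intro i hi
    have hi' : i < d := Finset.mem_range.1 hi
    have hiν : (0:ℝ) < ν - 1 - (i:ℝ) := by
      have : (i : ℝ) + 1 ≤ (d : ℝ) := by exact_mod_cast hi'
      linarith
    have h1 : (0:ℝ) < (ρ - 2 * s) ^ ((i:ℝ)+1-ν) := Real.rpow_pos_of_pos hb _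
    positivity
  have key : ∑' h : S, ENNReal.ofReal (1 / latNorm (h : Fin d → ℤ) ^ ν)
      ≤ ENNReal.ofReal ((2 * Real.pi ^ ((d : ℝ) / 2) / Real.Gamma ((d : ℝ) / 2)) *
        ∑ i ∈ Finset.range d, (Nat.choose (d - 1) i : ℝ) *
          (d : ℝ) ^ (((d : ℝ) - 1 - (i : ℝ)) / 2) /
            ((ν - 1 - (i : ℝ)) * (ρ - 2 * s) ^ (ν - 1 - (i : ℝ)))) := by
    refine le_trans (le_trans stepB (le_of_eq stepC)) (le_of_eq ?_)
    rw [hvol, ← ENNReal.ofReal_sum_of_nonneg hsumnn, ← ENNReal.ofReal_mul (by positivity),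
      hcst, Finset.sum_congr rfl hterm]
  have hRHSnn : (0:ℝ) ≤ (2 * Real.pi ^ ((d : ℝ) / 2) / Real.Gamma ((d : ℝ) / 2)) *
        ∑ i ∈ Finset.range d, (Nat.choose (d - 1) i : ℝ) *
          (d : ℝ) ^ (((d : ℝ) - 1 - (i : ℝ)) / 2) /
            ((ν - 1 - (i : ℝ)) * (ρ - 2 * s) ^ (ν - 1 - (i : ℝ))) := by
    apply mul_nonneg (div_nonneg (by positivity) hΓpos.le)
    apply Finset.sum_nonneg
    intro i hi
    have h := hsumnn i hi
    rw [hterm i hi] at h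
    exact h
  have hfnn : ∀ h : S, 0 ≤ 1 / latNorm (h : Fin d → ℤ) ^ ν := by
    intro h
    have h0 : 0 ≤ latNorm (h : Fin d → ℤ) := Real.sqrt_nonneg _
    positivity
  have hTne : (∑' h : S, ENNReal.ofReal (1 / latNorm (h : Fin d → ℤ) ^ ν)) ≠ ⊤ :=
    (lt_of_le_of_lt key ENNReal.ofReal_lt_top).ne
  constructor
  · exact (ENNReal.summable_toReal hTne).congr
      (fun h => ENNReal.toReal_ofReal (hfnn h))
  · have h1 : ∑' h : S, 1 / latNorm (h : Fin d → ℤ) ^ ν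
        = (∑' h : S, ENNReal.ofReal (1 / latNorm (h : Fin d → ℤ) ^ ν)).toReal := by
      rw [ENNReal.tsum_toReal_eq (fun _ => ENNReal.ofReal_ne_top)]
      exact tsum_congr fun h => (ENNReal.toReal_ofReal (hfnn h)).symm
    rw [h1]
    calc (∑' h : S, ENNReal.ofReal (1 / latNorm (h : Fin d → ℤ) ^ ν)).toReal
        ≤ (ENNReal.ofReal ((2 * Real.pi ^ ((d : ℝ) / 2) / Real.Gamma ((d : ℝ) / 2)) *
            ∑ i ∈ Finset.range d, (Nat.choose (d - 1) i : ℝ) *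
              (d : ℝ) ^ (((d : ℝ) - 1 - (i : ℝ)) / 2) /
                ((ν - 1 - (i : ℝ)) * (ρ - 2 * s) ^ (ν - 1 - (i : ℝ))))).toReal :=
          ENNReal.toReal_mono ENNReal.ofReal_ne_top key
      _ = _ := ENNReal.toReal_ofReal hRHSnn
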